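/- Let A be the cylinder obtained from the rectangle R = [0, E] × (0, 1) ⊂ ℂ (E > 0) by identifying the vertical sides, with flat metric |dz|. Let φ = (α + iβ)² dz² be a quadratic differential on A with α, β real-valued and ∫₀¹ ∫₀^E (α² + β²) dx dy ≤ E₀, and suppose ∫₀^E |α(x + iy)| dx ≥ E₀ for every y ∈ (0, 1). Then ∫₀¹ ∫₀^E (α² − β²) dx dy ≥ 2E₀²/E − E₀. -/

import Mathlib

open MeasureTheory

/-- Cauchy–Schwarz on a slice: (∫ |a|)² ≤ E · ∫ a². -/
lemma slice_cauchy_schwarz {E : ℝ} (hE : 0 < E) (a : ℝ → ℝ)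
    (ha2 : Integrable (fun x => a x ^ 2) (volume.restrict (Set.Ioc 0 E))) :
    (∫ x in Set.Ioc (0:ℝ) E, |a x|) ^ 2 ≤ E * ∫ x in Set.Ioc (0:ℝ) E, a x ^ 2 := by
  set μ := volume.restrict (Set.Ioc (0:ℝ) E) with hμ
  haveI : IsFiniteMeasure μ := by
    constructor
    rw [hμ, Measure.restrict_apply_univ, Real.volume_Ioc]
    exact ENNReal.ofReal_lt_top
  have hunivE : (μ Set.univ).toReal = E := by
    rw [hμ, Measure.restrict_apply_univ, Real.volume_Ioc, sub_zero,
      ENNReal.toReal_ofReal hE.le]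
  have hmeas : AEStronglyMeasurable (fun x => |a x|) μ := by
    have h1 : AEStronglyMeasurable (fun x => Real.sqrt (a x ^ 2)) μ :=
      Real.continuous_sqrt.comp_aestronglyMeasurable ha2.aestronglyMeasurable
    simpa [Real.sqrt_sq_eq_abs] using h1
  have ha1 : Integrable (fun x => |a x|) μ := by
    refine (ha2.add (integrable_const 1)).mono hmeas ?_
    filter_upwards with x
    have h1 : |a x| ≤ a x ^ 2 + 1 := by nlinarith [sq_nonneg (|a x| - 1), sq_abs (a x)]
    have h2 : (0:ℝ) ≤ a x ^ 2 + 1 := by positivity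
    simpa [Real.norm_eq_abs, abs_of_nonneg h2] using h1
  set I := ∫ x, |a x| ∂μ with hI
  set c := I / E with hc
  have h0 : 0 ≤ ∫ x, (|a x| - c) ^ 2 ∂μ := integral_nonneg fun x => sq_nonneg _
  have hexp : ∫ x, (|a x| - c) ^ 2 ∂μ
      = (∫ x, a x ^ 2 ∂μ) - 2 * c * I + c ^ 2 * E := by
    have heq : (fun x => (|a x| - c) ^ 2)
        = fun x => a x ^ 2 - (2 * c) * |a x| + c ^ 2 := by
      funext x; rw [sub_sq, sq_abs]; ring
    have hint2 : Integrable (fun x => (2 * c) * |a x|) μ := ha1.const_mul (2 * c)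
    have hint1 : Integrable (fun x => a x ^ 2 - (2 * c) * |a x|) μ := ha2.sub hint2
    rw [heq, integral_add hint1 (integrable_const _), integral_sub ha2 hint2,
      integral_const_mul, integral_const, smul_eq_mul, measureReal_def, hunivE]
    ring
  rw [hexp] at h0
  have hc2 : c ^ 2 * E = I ^ 2 / E := by field_simp [hc]; rw [hc]; field_simp
  have hcI : 2 * c * I = 2 * (I ^ 2 / E) := by field_simp [hc]; rw [hc]; field_simp
  rw [hc2, hcI] at h0
  have h5 : I ^ 2 / E ≤ ∫ x, a x ^ 2 ∂μ := by linarith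
  have h4 := (div_le_iff₀ hE).mp h5
  linarith [h4, mul_comm (∫ x, a x ^ 2 ∂μ) E]

/-- The annulus-stretching lemma: lower bound on the pairing ∫∫ (α² - β²). -/
theorem stretching_annulus_lower_bound
    (E E₀ : ℝ) (hE : 0 < E) (hE₀ : 0 < E₀)
    (α β : ℝ → ℝ → ℝ)
    (hαint : IntegrableOn (fun p : ℝ × ℝ => (α p.1 p.2) ^ 2)
      (Set.Ioc 0 E ×ˢ Set.Ioo (0 : ℝ) 1))
    (hβint : IntegrableOn (fun p : ℝ × ℝ => (β p.1 p.2) ^ 2)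
      (Set.Ioc 0 E ×ˢ Set.Ioo (0 : ℝ) 1))
    (htotal : ∫ y in Set.Ioo (0 : ℝ) 1, ∫ x in Set.Ioc 0 E,
        ((α x y) ^ 2 + (β x y) ^ 2) ≤ E₀)
    (htransverse : ∀ y ∈ Set.Ioo (0 : ℝ) 1,
        E₀ ≤ ∫ x in Set.Ioc 0 E, |α x y|) :
    2 * E₀ ^ 2 / E - E₀ ≤
      ∫ y in Set.Ioo (0 : ℝ) 1, ∫ x in Set.Ioc 0 E, ((α x y) ^ 2 - (β x y) ^ 2) := by
  set μ := volume.restrict (Set.Ioc (0:ℝ) E) with hμ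
  set ν := volume.restrict (Set.Ioo (0:ℝ) 1) with hν
  haveI : IsFiniteMeasure ν := by
    constructor
    rw [hν, Measure.restrict_apply_univ, Real.volume_Ioo]
    exact ENNReal.ofReal_lt_top
  have hprod : (volume : Measure (ℝ × ℝ)).restrict
      (Set.Ioc 0 E ×ˢ Set.Ioo (0:ℝ) 1) = μ.prod ν := by
    rw [hμ, hν, Measure.volume_eq_prod, Measure.prod_restrict]
  have hα2 : Integrable (fun p : ℝ × ℝ => (α p.1 p.2) ^ 2) (μ.prod ν) :=
    hprod ▸ hαint
  have hβ2 : Integrable (fun p : ℝ × ℝ => (β p.1 p.2) ^ 2) (μ.prod ν) :=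
    hprod ▸ hβint
  have hα2s : Integrable (fun p : ℝ × ℝ => (α p.2 p.1) ^ 2) (ν.prod μ) := hα2.swap
  have hβ2s : Integrable (fun p : ℝ × ℝ => (β p.2 p.1) ^ 2) (ν.prod μ) := hβ2.swap
  have hFae : ∀ᵐ y ∂ν, Integrable (fun x => α x y ^ 2) μ := hα2s.prod_right_ae
  have hGae : ∀ᵐ y ∂ν, Integrable (fun x => β x y ^ 2) μ := hβ2s.prod_right_ae
  have hFint : Integrable (fun y => ∫ x, α x y ^ 2 ∂μ) ν := hα2s.integral_prod_left
  have hGint : Integrable (fun y => ∫ x, β x y ^ 2 ∂μ) ν := hβ2s.integral_prod_left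
  -- key pointwise lower bound
  have key : ∀ᵐ y ∂ν, E₀ ^ 2 / E ≤ ∫ x, α x y ^ 2 ∂μ := by
    filter_upwards [hFae, ae_restrict_mem measurableSet_Ioo] with y hy hymem
    have h1 := htransverse y hymem
    have h2 := slice_cauchy_schwarz hE (fun x => α x y) hy
    have h3 : E₀ ^ 2 ≤ (∫ x in Set.Ioc (0:ℝ) E, |α x y|) ^ 2 :=
      pow_le_pow_left₀ hE₀.le h1 2
    rw [div_le_iff₀ hE]
    calc E₀ ^ 2 ≤ (∫ x in Set.Ioc (0:ℝ) E, |α x y|) ^ 2 := h3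
      _ ≤ E * ∫ x in Set.Ioc (0:ℝ) E, α x y ^ 2 := h2
      _ = (∫ x, α x y ^ 2 ∂μ) * E := by rw [mul_comm]
  -- split sums and differences
  have hsub : ∫ y, (∫ x, (α x y ^ 2 - β x y ^ 2) ∂μ) ∂ν
      = (∫ y, (∫ x, α x y ^ 2 ∂μ) ∂ν) - ∫ y, (∫ x, β x y ^ 2 ∂μ) ∂ν := by
    rw [← integral_sub hFint hGint]
    apply integral_congr_ae
    filter_upwards [hFae, hGae] with y h1 h2
    exact integral_sub h1 h2
  have hadd : ∫ y, (∫ x, (α x y ^ 2 + β x y ^ 2) ∂μ) ∂ν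
      = (∫ y, (∫ x, α x y ^ 2 ∂μ) ∂ν) + ∫ y, (∫ x, β x y ^ 2 ∂μ) ∂ν := by
    rw [← integral_add hFint hGint]
    apply integral_congr_ae
    filter_upwards [hFae, hGae] with y h1 h2
    exact integral_add h1 h2
  have hFlower : E₀ ^ 2 / E ≤ ∫ y, (∫ x, α x y ^ 2 ∂μ) ∂ν := by
    have h1 : ∫ (_ : ℝ), (E₀ ^ 2 / E) ∂ν ≤ ∫ y, (∫ x, α x y ^ 2 ∂μ) ∂ν :=
      integral_mono_ae (integrable_const _) hFint key
    have h2 : ∫ (_ : ℝ), (E₀ ^ 2 / E) ∂ν = E₀ ^ 2 / E := by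
      rw [integral_const, smul_eq_mul]
      rw [measureReal_def, hν, Measure.restrict_apply_univ, Real.volume_Ioo]
      norm_num
    linarith
  have htot : (∫ y, (∫ x, α x y ^ 2 ∂μ) ∂ν) + (∫ y, (∫ x, β x y ^ 2 ∂μ) ∂ν) ≤ E₀ := by
    rw [← hadd]; exact htotal
  rw [hsub]
  have h6 : 2 * E₀ ^ 2 / E = 2 * (E₀ ^ 2 / E) := by ring
  linarith
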